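/- Let m ≥ 1, η > 0, h ∈ ℝ^m and u ∈ [−1,1]^m. Define f : ℝ → ℝ by f(t) = ( Σ_{i=1}^m u_i·exp(η(h_i − u_i t)) ) / ( Σ_{i=1}^m exp(η(h_i − u_i t)) ). Then f is differentiable with f'(t) ≥ −η for all t ∈ ℝ, and consequently ∫_0^1 f(t) dt ≥ f(0) − η/2. -/

import Mathlib

open MeasureTheory

noncomputable def gibbsF {m : ℕ} (η : ℝ) (h u : Fin m → ℝ) (t : ℝ) : ℝ :=
  (∑ i, u i * Real.exp (η * (h i - u i * t))) / (∑ i, Real.exp (η * (h i - u i * t)))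

section aux
variable {m : ℕ} (η : ℝ) (h u : Fin m → ℝ)

lemma expDeriv (i : Fin m) (t : ℝ) :
    HasDerivAt (fun t => Real.exp (η * (h i - u i * t)))
      (Real.exp (η * (h i - u i * t)) * (-(η * u i))) t := by
  have h1 : HasDerivAt (fun t : ℝ => η * (h i - u i * t)) (-(η * u i)) t := by
    have := (((hasDerivAt_id t).const_mul (u i)).const_sub (h i)).const_mul η
    simpa using this
  simpa using h1.exp

lemma gibbsHasDeriv (hm : 0 < m) (t : ℝ) :
    HasDerivAt (gibbsF η h u)
      (((-η) * (∑ i, (u i)^2 * Real.exp (η * (h i - u i * t))) *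
          (∑ i, Real.exp (η * (h i - u i * t))) -
        (∑ i, u i * Real.exp (η * (h i - u i * t))) *
          ((-η) * (∑ i, u i * Real.exp (η * (h i - u i * t))))) /
        (∑ i, Real.exp (η * (h i - u i * t)))^2) t := by
  haveI : Nonempty (Fin m) := Fin.pos_iff_nonempty.mp hm
  have hSpos : 0 < ∑ i, Real.exp (η * (h i - u i * t)) :=
    Finset.sum_pos (fun i _ => Real.exp_pos _) Finset.univ_nonempty
  have hN : HasDerivAt (fun t => ∑ i, u i * Real.exp (η * (h i - u i * t)))
      ((-η) * (∑ i, (u i)^2 * Real.exp (η * (h i - u i * t)))) t := by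
    have := HasDerivAt.fun_sum (u := Finset.univ) (fun i _ => (expDeriv η h u i t).const_mul (u i))
    refine this.congr_deriv ?_
    rw [Finset.mul_sum]
    exact Finset.sum_congr rfl (fun i _ => by ring)
  have hS : HasDerivAt (fun t => ∑ i, Real.exp (η * (h i - u i * t)))
      ((-η) * (∑ i, u i * Real.exp (η * (h i - u i * t)))) t := by
    have := HasDerivAt.fun_sum (u := Finset.univ) (fun i _ => expDeriv η h u i t)
    refine this.congr_deriv ?_
    rw [Finset.mul_sum]
    exact Finset.sum_congr rfl (fun i _ => by ring)
  exact hN.div hS hSpos.ne'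

lemma gibbsDerivBound (hm : 0 < m) (hη : 0 < η)
    (hu : ∀ i, u i ∈ Set.Icc (-1 : ℝ) 1) (t : ℝ) :
    -η ≤ deriv (gibbsF η h u) t := by
  haveI : Nonempty (Fin m) := Fin.pos_iff_nonempty.mp hm
  set e : Fin m → ℝ := fun i => Real.exp (η * (h i - u i * t)) with he
  have hSpos : 0 < ∑ i, e i := Finset.sum_pos (fun i _ => Real.exp_pos _) Finset.univ_nonempty
  rw [(gibbsHasDeriv η h u hm t).deriv]
  set A := ∑ i, e i
  set B := ∑ i, u i * e i
  set C := ∑ i, (u i)^2 * e i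
  have hCA : C ≤ A := by
    apply Finset.sum_le_sum
    intro i _
    have h1 := (hu i).1
    have h2 := (hu i).2
    have : (u i)^2 ≤ 1 := by nlinarith
    nlinarith [Real.exp_pos (η * (h i - u i * t))]
  have hB2 : 0 ≤ B^2 := sq_nonneg B
  rw [le_div_iff₀ (by positivity : (0:ℝ) < A^2)]
  nlinarith [mul_nonneg hSpos.le (sub_nonneg.mpr hCA), hη.le,
    mul_nonneg hη.le (mul_nonneg hSpos.le (sub_nonneg.mpr hCA)), mul_nonneg hη.le hB2]

lemma gibbsLower (hm : 0 < m) (hη : 0 < η)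
    (hu : ∀ i, u i ∈ Set.Icc (-1 : ℝ) 1) (t : ℝ) (ht : 0 ≤ t) :
    gibbsF η h u 0 - η * t ≤ gibbsF η h u t := by
  have hmono : Monotone (fun t => gibbsF η h u t + η * t) := by
    apply monotone_of_deriv_nonneg
    · intro s
      exact ((gibbsHasDeriv η h u hm s).differentiableAt.add
        ((differentiable_id.const_mul η) s))
    · intro s
      have hd : HasDerivAt (fun t => gibbsF η h u t + η * t)
          (deriv (gibbsF η h u) s + η) s := by
        have := (gibbsHasDeriv η h u hm s).deriv
        have h1 : HasDerivAt (gibbsF η h u) (deriv (gibbsF η h u) s) s := by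
          rw [this]; exact gibbsHasDeriv η h u hm s
        simpa using h1.fun_add ((hasDerivAt_id s).const_mul η)
      rw [hd.deriv]
      have := gibbsDerivBound η h u hm hη hu s
      linarith
  have := hmono ht
  simp only at this
  linarith

end aux

theorem stmt11 (m : ℕ) (hm : 0 < m) (η : ℝ) (hη : 0 < η) (h u : Fin m → ℝ)
    (hu : ∀ i, u i ∈ Set.Icc (-1 : ℝ) 1) :
    (∀ t : ℝ, DifferentiableAt ℝ (gibbsF η h u) t) ∧
    (∀ t : ℝ, -η ≤ deriv (gibbsF η h u) t) ∧
    gibbsF η h u 0 - η / 2 ≤ ∫ t in (0:ℝ)..1, gibbsF η h u t := by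
  refine ⟨fun t => (gibbsHasDeriv η h u hm t).differentiableAt,
    fun t => gibbsDerivBound η h u hm hη hu t, ?_⟩
  have hcont : Continuous (gibbsF η h u) :=
    Differentiable.continuous (fun t => (gibbsHasDeriv η h u hm t).differentiableAt)
  have hle : ∀ t ∈ Set.Icc (0:ℝ) 1, gibbsF η h u 0 - η * t ≤ gibbsF η h u t :=
    fun t ht => gibbsLower η h u hm hη hu t ht.1
  have h1 : ∫ t in (0:ℝ)..1, (gibbsF η h u 0 - η * t) ≤ ∫ t in (0:ℝ)..1, gibbsF η h u t := by
    apply intervalIntegral.integral_mono_on (by norm_num)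
    · exact (Continuous.intervalIntegrable (by continuity) 0 1)
    · exact hcont.intervalIntegrable 0 1
    · exact hle
  have h2 : ∫ t in (0:ℝ)..1, (gibbsF η h u 0 - η * t) = gibbsF η h u 0 - η / 2 := by
    have hint : IntervalIntegrable (fun t : ℝ => η * t) volume 0 1 :=
      Continuous.intervalIntegrable (by continuity) 0 1
    rw [intervalIntegral.integral_sub intervalIntegrable_const hint,
      intervalIntegral.integral_const, intervalIntegral.integral_const_mul,
      integral_id]
    simp [smul_eq_mul]; ring
  linarith
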